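/- (Bias of CIPS with estimated click probabilities.) Given estimated click probabilities p̂_c : 𝒳 → 𝒜 → ℛ → ℝ, set p̂_c(x,a,μ) := E_{A∼μ(x)}[p̂_c(x,a,A)] for a policy μ, and ŵ(x,a) := p̂_c(x,a,π)/p̂_c(x,a,π₀) (with t/0 := 0). Under the independence of potential rewards condition, the click–reward factorization condition, and the click-wise common support condition, the estimator's bias over one logged sample satisfies E_{x∼p, A∼π₀(x), ω∼κ(x,A)}[ ∑_{a∈𝒜} ŵ(x,a)·C(ω,a)·R(ω,a) ] − V(π) = E_{x∼p}[ ∑_{a∈𝒜} p_c(x,a,π₀)·( ŵ(x,a) − w(x,a) )·q_r(x,a) ], where w(x,a) := p_c(x,a,π)/p_c(x,a,π₀) with t/0 := 0. -/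
import Mathlib


open scoped BigOperators Classical

/-- Expectation of a real-valued function under a PMF on a finite type. -/
noncomputable def pexp {X : Type*} [Fintype X] (p : PMF X) (f : X → ℝ) : ℝ :=
  ∑ x, (p x).toReal * f x

/-- Variance of a real-valued function under a PMF on a finite type. -/
noncomputable def pvar {X : Type*} [Fintype X] (p : PMF X) (f : X → ℝ) : ℝ :=
  pexp p (fun x => (f x - pexp p f) ^ 2)

/-- Joint distribution of one logged sample (x, A, ω) with x ∼ p, A ∼ π₀(x), ω ∼ κ(x,A). -/
noncomputable def logged {𝒳 ℛ Ω : Type*} (p : PMF 𝒳) (π₀ : 𝒳 → PMF ℛ)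
    (κ : 𝒳 → ℛ → PMF Ω) : PMF (𝒳 × ℛ × Ω) :=
  p.bind fun x => (π₀ x).bind fun A => (κ x A).map fun ω => (x, A, ω)

/-- Click probability of action a at context x given ranking A: p_c(x,a,A). -/
noncomputable def pcA {𝒳 ℛ Ω 𝒜 : Type*} [Fintype Ω]
    (κ : 𝒳 → ℛ → PMF Ω) (C : Ω → 𝒜 → ℝ) (x : 𝒳) (a : 𝒜) (A : ℛ) : ℝ :=
  pexp (κ x A) fun ω => C ω a

/-- Marginalized click probability of action a at context x under policy μ: p_c(x,a,μ). -/
noncomputable def pcPol {𝒳 ℛ Ω 𝒜 : Type*} [Fintype Ω] [Fintype ℛ]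
    (κ : 𝒳 → ℛ → PMF Ω) (C : Ω → 𝒜 → ℝ) (μ : 𝒳 → PMF ℛ) (x : 𝒳) (a : 𝒜) : ℝ :=
  pexp (μ x) fun A => pcA κ C x a A

/-- Policy value V(π). -/
noncomputable def polValue {𝒳 ℛ Ω 𝒜 : Type*} [Fintype 𝒳] [Fintype ℛ] [Fintype Ω] [Fintype 𝒜]
    (p : PMF 𝒳) (π : 𝒳 → PMF ℛ) (κ : 𝒳 → ℛ → PMF Ω) (C R : Ω → 𝒜 → ℝ) : ℝ :=
  pexp p fun x => pexp (π x) fun A => pexp (κ x A) fun ω => ∑ a, C ω a * R ω a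

lemma pexp_pure {X : Type*} [Fintype X] (b : X) (f : X → ℝ) :
    pexp (PMF.pure b) f = f b := by
  simp [pexp, PMF.pure_apply, apply_ite ENNReal.toReal]

lemma pexp_bind {X Y : Type*} [Fintype X] [Fintype Y] (p : PMF X) (g : X → PMF Y) (f : Y → ℝ) :
    pexp (p.bind g) f = pexp p fun x => pexp (g x) f := by
  simp only [pexp, PMF.bind_apply, tsum_fintype]
  have h : ∀ y, ((∑ x, p x * g x y).toReal) = ∑ x, (p x).toReal * (g x y).toReal := by
    intro y
    rw [ENNReal.toReal_sum]
    · simp [ENNReal.toReal_mul]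
    · intro x _
      exact ENNReal.mul_ne_top (PMF.apply_ne_top p x) (PMF.apply_ne_top (g x) y)
  simp_rw [h, Finset.sum_mul]
  rw [Finset.sum_comm]
  simp [Finset.mul_sum, mul_assoc]

lemma pexp_map {X Y : Type*} [Fintype X] [Fintype Y] (p : PMF X) (h : X → Y) (f : Y → ℝ) :
    pexp (p.map h) f = pexp p fun x => f (h x) := by
  rw [PMF.map, pexp_bind]
  simp [pexp_pure]

lemma pexp_sum {X ι : Type*} [Fintype X] [Fintype ι] (p : PMF X) (g : ι → X → ℝ) :
    pexp p (fun x => ∑ i, g i x) = ∑ i, pexp p (g i) := by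
  simp_rw [pexp, Finset.mul_sum]
  exact Finset.sum_comm

lemma pexp_const_mul {X : Type*} [Fintype X] (p : PMF X) (c : ℝ) (f : X → ℝ) :
    pexp p (fun x => c * f x) = c * pexp p f := by
  simp [pexp, Finset.mul_sum]; congr 1; ext x; ring

lemma pexp_sub {X : Type*} [Fintype X] (p : PMF X) (f g : X → ℝ) :
    pexp p (fun x => f x - g x) = pexp p f - pexp p g := by
  simp [pexp, mul_sub, Finset.sum_sub_distrib]

/-- Bias of CIPS with estimated click probabilities. -/
theorem CIPS_bias_estimated_clicks {𝒳 ℛ Ω 𝒜 : Type*}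
    [Fintype 𝒳] [Nonempty 𝒳] [Fintype ℛ] [Nonempty ℛ] [Fintype Ω] [Nonempty Ω] [Fintype 𝒜]
    (p : PMF 𝒳) (π π₀ : 𝒳 → PMF ℛ) (κ : 𝒳 → ℛ → PMF Ω)
    (C R : Ω → 𝒜 → ℝ) (hC : ∀ ω a, C ω a = 0 ∨ C ω a = 1)
    (q_r : 𝒳 → 𝒜 → ℝ)
    (hind : ∀ x a A, pexp (κ x A) (fun ω => R ω a) = q_r x a)
    (hfact : ∀ x a A,
      pexp (κ x A) (fun ω => C ω a * R ω a) = pcA κ C x a A * q_r x a)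
    (hsupp : ∀ x a, 0 < pcPol κ C π x a → 0 < pcPol κ C π₀ x a)
    (phat : 𝒳 → 𝒜 → ℛ → ℝ) :
    pexp (logged p π₀ κ)
        (fun s => ∑ a,
          ((pexp (π s.1) (fun A => phat s.1 a A)) /
            (pexp (π₀ s.1) (fun A => phat s.1 a A))) * C s.2.2 a * R s.2.2 a)
      - polValue p π κ C R
    = pexp p (fun x => ∑ a,
        pcPol κ C π₀ x a *
          ((pexp (π x) (fun A => phat x a A)) / (pexp (π₀ x) (fun A => phat x a A))
            - pcPol κ C π x a / pcPol κ C π₀ x a) * q_r x a) := by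
  set w : 𝒳 → 𝒜 → ℝ := fun x a =>
    (pexp (π x) (fun A => phat x a A)) / (pexp (π₀ x) (fun A => phat x a A)) with hw
  -- nonnegativity of click probabilities
  have hC0 : ∀ ω a, 0 ≤ C ω a := by
    intro ω a; rcases hC ω a with h | h <;> simp [h]
  have hpcPol_nonneg : ∀ (μ : 𝒳 → PMF ℛ) x a, 0 ≤ pcPol κ C μ x a := by
    intro μ x a
    apply Finset.sum_nonneg; intro A _
    refine mul_nonneg ENNReal.toReal_nonneg ?_
    apply Finset.sum_nonneg; intro ω _
    exact mul_nonneg ENNReal.toReal_nonneg (hC0 ω a)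
  have hcancel : ∀ x a,
      pcPol κ C π₀ x a * (pcPol κ C π x a / pcPol κ C π₀ x a) = pcPol κ C π x a := by
    intro x a
    by_cases h : pcPol κ C π₀ x a = 0
    · have hπ : pcPol κ C π x a = 0 := by
        by_contra hne
        have : 0 < pcPol κ C π x a := lt_of_le_of_ne (hpcPol_nonneg π x a) (Ne.symm hne)
        exact absurd (hsupp x a this) (by simp [h])
      simp [h, hπ]
    · rw [mul_comm, div_mul_cancel₀ _ h]
  -- compute the logged-sample expectation
  have hlog : pexp (logged p π₀ κ)
        (fun s => ∑ a, w s.1 a * C s.2.2 a * R s.2.2 a)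
      = pexp p fun x => ∑ a, w x a * pcPol κ C π₀ x a * q_r x a := by
    rw [logged, pexp_bind]
    apply Finset.sum_congr rfl; intro x _
    congr 1
    dsimp only
    rw [pexp_bind]
    have hmap : ∀ A, pexp (PMF.map (fun ω => (x, A, ω)) (κ x A))
        (fun s : 𝒳 × ℛ × Ω => ∑ a, w s.1 a * C s.2.2 a * R s.2.2 a)
        = ∑ a, w x a * (pcA κ C x a A * q_r x a) := by
      intro A
      rw [pexp_map]
      dsimp only
      rw [pexp_sum]
      apply Finset.sum_congr rfl; intro a _
      simp_rw [mul_assoc]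
      rw [pexp_const_mul, hfact]
    simp_rw [hmap]
    rw [pexp_sum]
    apply Finset.sum_congr rfl; intro a _
    rw [show (fun A' => w x a * (pcA κ C x a A' * q_r x a))
        = fun A' => (w x a * q_r x a) * pcA κ C x a A' by ext A'; ring]
    rw [pexp_const_mul]
    unfold pcPol
    ring
  -- compute the policy value
  have hval : polValue p π κ C R = pexp p fun x => ∑ a, pcPol κ C π x a * q_r x a := by
    unfold polValue
    apply Finset.sum_congr rfl; intro x _
    congr 1
    have h1 : ∀ A, pexp (κ x A) (fun ω => ∑ a, C ω a * R ω a)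
        = ∑ a, pcA κ C x a A * q_r x a := by
      intro A
      rw [pexp_sum]
      exact Finset.sum_congr rfl fun a _ => hfact x a A
    simp_rw [h1]
    unfold pcPol
    rw [pexp_sum]
    apply Finset.sum_congr rfl; intro a _
    rw [show (fun A => pcA κ C x a A * q_r x a)
        = fun A => q_r x a * pcA κ C x a A by ext A; ring]
    rw [pexp_const_mul]
    ring
  rw [hlog, hval, ← pexp_sub]
  apply Finset.sum_congr rfl; intro x _
  congr 1
  dsimp only
  rw [← Finset.sum_sub_distrib]
  apply Finset.sum_congr rfl; intro a _
  linear_combination q_r x a * hcancel x a
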